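/- Let N ≥ 1, r ≥ 1 and n ≥ 1 be integers. Then B_{N,n}^{(r+1)}(x) = (1/N)·(N − n/r)·B_{N,n}^{(r)}(x) + (1/N)·(n/r)·(x − r)·B_{N,n−1}^{(r)}(x) as an identity of polynomials in ℚ[x]. -/

import Mathlib

open Finset Polynomial PowerSeries

lemma coeff_derivativeFun' {R : Type*} [CommSemiring R] (f : PowerSeries R) (n : ℕ) :
    PowerSeries.coeff n (PowerSeries.derivativeFun f) = PowerSeries.coeff (n + 1) f * (n + 1) :=
  PowerSeries.coeff_derivative f n

lemma map_deriv' {S : Type*} [CommRing S] (f : ℚ →+* S) (g : PowerSeries ℚ) :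
    PowerSeries.map f (PowerSeries.derivativeFun g) = PowerSeries.derivativeFun (PowerSeries.map f g) := by
  ext m
  simp [PowerSeries.coeff_map, coeff_derivativeFun']

lemma fac_inv_succ (m : ℕ) :
    (((m+1).factorial : ℚ))⁻¹ * ((m : ℚ) + 1) = ((m.factorial : ℚ))⁻¹ := by
  have h1 : ((m.factorial : ℚ)) ≠ 0 := Nat.cast_ne_zero.mpr m.factorial_ne_zero
  have h2 : ((m : ℚ) + 1) ≠ 0 := by positivity
  rw [Nat.factorial_succ]
  push_cast
  field_simp

section QLevel
variable (N : ℕ)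

noncomputable def Eser : PowerSeries ℚ := PowerSeries.mk fun j => if N ≤ j then ((j.factorial : ℚ))⁻¹ else 0
noncomputable def Pser (k : ℕ) : PowerSeries ℚ := PowerSeries.mk fun j => if j = k then ((k.factorial : ℚ))⁻¹ else 0

lemma hdE (hN : 1 ≤ N) : PowerSeries.derivativeFun (Eser N) = Eser N + Pser (N-1) := by
  ext m
  simp only [coeff_derivativeFun', Eser, Pser, PowerSeries.coeff_mk, map_add]
  rcases lt_trichotomy m (N-1) with h | h | h
  · rw [if_neg, if_neg, if_neg]
    · ring
    · omega
    · omega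
    · omega
  · subst h
    rw [if_pos (by omega), if_neg (by omega), if_pos rfl, zero_add]
    have : N - 1 + 1 = N := by omega
    rw [fac_inv_succ]
  · rw [if_pos (by omega), if_pos (by omega), if_neg (by omega), add_zero]
    rw [fac_inv_succ]

lemma hdP (hN : 1 ≤ N) : PowerSeries.derivativeFun (Pser N) = Pser (N-1) := by
  ext m
  simp only [coeff_derivativeFun', Pser, PowerSeries.coeff_mk]
  rcases eq_or_ne m (N-1) with h | h
  · subst h
    rw [if_pos (by omega), if_pos rfl]
    have hN1 : N - 1 + 1 = N := by omega
    calc ((N.factorial : ℚ))⁻¹ * ((N - 1 : ℕ) + 1 : ℚ)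
        = (((N-1+1).factorial : ℚ))⁻¹ * (((N-1:ℕ) : ℚ) + 1) := by rw [hN1]
      _ = (((N-1).factorial : ℚ))⁻¹ := fac_inv_succ _
  · rw [if_neg (by omega), if_neg h, zero_mul]

lemma hXP (hN : 1 ≤ N) : (PowerSeries.X : PowerSeries ℚ) * Pser (N-1)
    = PowerSeries.C ((N : ℚ)) * Pser N := by
  ext m
  rw [PowerSeries.coeff_C_mul]
  cases m with
  | zero =>
      rw [PowerSeries.coeff_zero_X_mul]
      simp only [Pser, PowerSeries.coeff_mk]
      rw [if_neg (by omega), mul_zero]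
  | succ m =>
      rw [PowerSeries.coeff_succ_X_mul]
      simp only [Pser, PowerSeries.coeff_mk]
      rcases eq_or_ne m (N-1) with h | h
      · subst h
        rw [if_pos rfl, if_pos (by omega)]
        have hN1 : N - 1 + 1 = N := by omega
        rw [← fac_inv_succ (N-1), hN1]
        rw [Nat.cast_sub hN]
        push_cast
        ring
      · rw [if_neg h, if_neg (by omega), mul_zero]

lemma Eser_ne_zero : Eser N ≠ 0 := by
  intro h
  have := congrArg (PowerSeries.coeff N) h
  simp only [Eser, PowerSeries.coeff_mk, if_pos le_rfl, map_zero] at this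
  exact Nat.cast_ne_zero.mpr N.factorial_ne_zero (inv_eq_zero.mp this)

lemma key_identity (hN : 1 ≤ N) (F : PowerSeries ℚ) (hF : F * Eser N = Pser N) :
    (PowerSeries.X : PowerSeries ℚ) * PowerSeries.derivativeFun F
      = PowerSeries.C (N : ℚ) * F - PowerSeries.X * F - PowerSeries.C (N : ℚ) * F ^ 2 := by
  have hd := (PowerSeries.derivativeFun_mul F (Eser N)).symm.trans
    (congrArg PowerSeries.derivativeFun hF)
  rw [hdE N hN, hdP N hN, smul_eq_mul, smul_eq_mul] at hd
  have h3 := hXP N hN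
  refine mul_right_cancel₀ (Eser_ne_zero N) ?_
  linear_combination (PowerSeries.X : PowerSeries ℚ) * hd + (1 - F) * h3
    + (-(1 - F) * PowerSeries.C (N : ℚ)) * hF

end QLevel

section PolyLevel

noncomputable def eser : PowerSeries (Polynomial ℚ) :=
  PowerSeries.mk fun m => ((m.factorial : ℚ))⁻¹ • (Polynomial.X : Polynomial ℚ) ^ m

lemma hde : PowerSeries.derivativeFun eser = PowerSeries.C (Polynomial.X : Polynomial ℚ) * eser := by
  ext m
  rw [coeff_derivativeFun', PowerSeries.coeff_C_mul]
  simp only [eser, PowerSeries.coeff_mk]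
  rw [smul_mul_assoc]
  rw [show ((Polynomial.X : Polynomial ℚ) ^ (m+1)) * (((m:ℕ):Polynomial ℚ) + 1)
      = ((m : ℚ) + 1) • ((Polynomial.X : Polynomial ℚ) * Polynomial.X ^ m) by
    rw [Polynomial.smul_eq_C_mul, ← pow_succ', map_add, map_one, map_natCast, mul_comm]]
  rw [smul_smul, fac_inv_succ, mul_smul_comm]

lemma derivFun_pow {R : Type*} [CommRing R] (A : PowerSeries R) (r : ℕ) :
    PowerSeries.derivativeFun (A ^ r)
      = (r : PowerSeries R) * A ^ (r - 1) * PowerSeries.derivativeFun A := by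
  induction r with
  | zero => simp [PowerSeries.derivativeFun_one]
  | succ k ih =>
      rw [pow_succ, PowerSeries.derivativeFun_mul, ih, smul_eq_mul, smul_eq_mul]
      rcases Nat.eq_zero_or_pos k with hk | hk
      · subst hk; simp
      · have h1 : A * A ^ (k - 1) = A ^ k := by
          rw [← pow_succ', Nat.sub_add_cancel hk]
        have h2 : k + 1 - 1 = k := rfl
        rw [h2]
        push_cast
        linear_combination ((k : PowerSeries R) * PowerSeries.derivativeFun A) * h1

end PolyLevel

/-- Lemma 2: `B_{N,n}^{(r+1)}(x) = (1/N)(N - n/r)·B_{N,n}^{(r)}(x)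
  + (1/N)(n/r)(x - r)·B_{N,n-1}^{(r)}(x)` for `n ≥ 1`.
Here `Br ρ m = B_{N,m}^{(ρ)}(x)` is the family of higher order hypergeometric Bernoulli
polynomials, whose exponential generating function (in `t`) is `F_N(t)^ρ · e^{xt}`, where
`F_N(t) ∈ ℚ⟦t⟧` is the unique power series with `F_N(t)·(e^t - T_{N-1}(t)) = t^N/N!`. -/
theorem higher_order_hypergeometric_bernoulli_order_recurrence
    (N r n : ℕ) (hN : 1 ≤ N) (hr : 1 ≤ r) (hn : 1 ≤ n)
    (F : PowerSeries ℚ)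
    (hF : F * (PowerSeries.mk fun j => if N ≤ j then ((j.factorial : ℚ))⁻¹ else 0)
        = PowerSeries.mk fun j => if j = N then ((N.factorial : ℚ))⁻¹ else 0)
    (Br : ℕ → ℕ → Polynomial ℚ)
    (hBr : ∀ ρ : ℕ, PowerSeries.mk (fun m => ((m.factorial : ℚ))⁻¹ • Br ρ m)
        = (PowerSeries.map (Polynomial.C : ℚ →+* Polynomial ℚ) F) ^ ρ
            * PowerSeries.mk (fun m => ((m.factorial : ℚ))⁻¹ • (Polynomial.X : Polynomial ℚ) ^ m)) :
    Br (r + 1) n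
      = (((N : ℚ))⁻¹ * ((N : ℚ) - (n : ℚ) / (r : ℚ))) • Br r n
        + (((N : ℚ))⁻¹ * ((n : ℚ) / (r : ℚ))) •
            ((Polynomial.X - Polynomial.C (r : ℚ)) * Br r (n - 1)) := by
  have hF' : F * Eser N = Pser N := hF
  have hkey := key_identity N hN F hF'
  set A : PowerSeries (Polynomial ℚ) :=
    PowerSeries.map (Polynomial.C : ℚ →+* Polynomial ℚ) F with hAdef
  have hkeyA : (PowerSeries.X : PowerSeries (Polynomial ℚ)) * PowerSeries.derivativeFun A
      = (N : PowerSeries (Polynomial ℚ)) * A - PowerSeries.X * A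
        - (N : PowerSeries (Polynomial ℚ)) * A ^ 2 := by
    have h := congrArg (PowerSeries.map (Polynomial.C : ℚ →+* Polynomial ℚ)) hkey
    simpa [map_mul, map_sub, map_pow, PowerSeries.map_X, PowerSeries.map_C, map_natCast,
      map_deriv', ← hAdef] using h
  have hApow : A ^ (r - 1) * A = A ^ r := by
    rw [← pow_succ, Nat.sub_add_cancel hr]
  have hApow2 : A ^ (r - 1) * A ^ 2 = A ^ (r + 1) := by
    rw [← pow_add]; congr 1; omega
  have hdG : PowerSeries.derivativeFun (A ^ r * eser)
      = A ^ r * (PowerSeries.C (Polynomial.X : Polynomial ℚ) * eser)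
        + eser * ((r : PowerSeries (Polynomial ℚ)) * (A ^ (r - 1) * PowerSeries.derivativeFun A)) := by
    rw [PowerSeries.derivativeFun_mul, hde, derivFun_pow, smul_eq_mul, smul_eq_mul]
    ring
  have hCrN : PowerSeries.C (Polynomial.C ((r : ℚ) * (N : ℚ)))
      = (r : PowerSeries (Polynomial ℚ)) * (N : PowerSeries (Polynomial ℚ)) := by
    rw [map_mul, map_mul, map_natCast, map_natCast, map_natCast, map_natCast]
  have hCr : PowerSeries.C (Polynomial.C ((r : ℚ)))
      = (r : PowerSeries (Polynomial ℚ)) := by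
    rw [map_natCast, map_natCast]
  have hstar : PowerSeries.C (Polynomial.C ((r : ℚ) * (N : ℚ)))
        * (A ^ (r + 1) * eser)
        + PowerSeries.X * PowerSeries.derivativeFun (A ^ r * eser)
      = PowerSeries.C (Polynomial.C ((r : ℚ) * (N : ℚ))) * (A ^ r * eser)
        + PowerSeries.C (Polynomial.X - Polynomial.C ((r : ℚ)))
            * (PowerSeries.X * (A ^ r * eser)) := by
    rw [hCrN, map_sub, hCr]
    linear_combination (PowerSeries.X : PowerSeries (Polynomial ℚ)) * hdG
      + ((r : PowerSeries (Polynomial ℚ)) * eser * A ^ (r - 1)) * hkeyA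
      + ((r : PowerSeries (Polynomial ℚ))
          * ((N : PowerSeries (Polynomial ℚ)) - PowerSeries.X) * eser) * hApow
      - ((r : PowerSeries (Polynomial ℚ)) * (N : PowerSeries (Polynomial ℚ)) * eser) * hApow2
  have hG : ∀ ρ : ℕ, PowerSeries.mk (fun m => ((m.factorial : ℚ))⁻¹ • Br ρ m)
      = A ^ ρ * eser := fun ρ => hBr ρ
  rw [← hG (r + 1), ← hG r] at hstar
  obtain ⟨m, rfl⟩ : ∃ m, n = m + 1 := ⟨n - 1, (Nat.succ_pred_eq_of_pos hn).symm⟩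
  have hcoeff := congrArg (PowerSeries.coeff (m + 1)) hstar
  simp only [map_add, PowerSeries.coeff_C_mul, PowerSeries.coeff_succ_X_mul,
    coeff_derivativeFun', PowerSeries.coeff_mk] at hcoeff
  rw [← Polynomial.smul_eq_C_mul, ← Polynomial.smul_eq_C_mul,
    show ((m : Polynomial ℚ) + 1) = Polynomial.C ((m : ℚ) + 1) by simp,
    mul_comm _ (Polynomial.C ((m : ℚ) + 1)), ← Polynomial.smul_eq_C_mul,
    mul_smul_comm] at hcoeff

  simp only [smul_smul] at hcoeff
  have hq1 : ((r : ℚ) * (N : ℚ) * (((m + 1).factorial : ℚ))⁻¹) ≠ 0 := by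
    have h1 : (r : ℚ) ≠ 0 := Nat.cast_ne_zero.mpr (by omega)
    have h2 : (N : ℚ) ≠ 0 := Nat.cast_ne_zero.mpr (by omega)
    have h3 : (((m + 1).factorial : ℚ)) ≠ 0 := Nat.cast_ne_zero.mpr (m + 1).factorial_ne_zero
    positivity
  have hcoeff2 := eq_sub_of_add_eq hcoeff
  have ha : Br (r + 1) (m + 1)
      = ((r : ℚ) * (N : ℚ) * (((m + 1).factorial : ℚ))⁻¹)⁻¹
          • ((((r : ℚ) * (N : ℚ) * (((m + 1).factorial : ℚ))⁻¹) • Br r (m + 1)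
            + ((m.factorial : ℚ))⁻¹
                • ((Polynomial.X - Polynomial.C ((r : ℚ))) * Br r m)
            - (((m : ℚ) + 1) * (((m + 1).factorial : ℚ))⁻¹) • Br r (m + 1))) := by
    rw [← hcoeff2, inv_smul_smul₀ hq1]
  simp only [Nat.add_sub_cancel]
  rw [ha]
  have h1 : (r : ℚ) ≠ 0 := Nat.cast_ne_zero.mpr (by omega)
  have h2 : (N : ℚ) ≠ 0 := Nat.cast_ne_zero.mpr (by omega)
  have h3 : (((m + 1).factorial : ℚ)) ≠ 0 := Nat.cast_ne_zero.mpr (m + 1).factorial_ne_zero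
  have h4 : ((m.factorial : ℚ)) ≠ 0 := Nat.cast_ne_zero.mpr m.factorial_ne_zero
  match_scalars
  · field_simp [Nat.factorial_succ]
  · field_simp [Nat.factorial_succ]
    rw [Nat.factorial_succ]; push_cast; ring
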